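/- The multiplicative NMF majorization matrix dominates the Hessian: for W ∈ ℝ^{M×K} with all positive entries and h ∈ ℝ^K with all positive entries, the diagonal matrix Φ with Φ_{jj} = [WᵀW h]_j / h_j satisfies Φ ⪰ WᵀW (i.e., Φ - WᵀW is positive semidefinite). -/

import Mathlib

open Matrix

/-- Multiplicative NMF majorization: for W with positive entries and h > 0, the
diagonal matrix Φ with Φ_jj = [WᵀWh]_j / h_j satisfies Φ ⪰ WᵀW. -/
theorem stmt_15 {M K : ℕ}
    (W : Matrix (Fin M) (Fin K) ℝ) (hW : ∀ i j, 0 < W i j)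
    (h : Fin K → ℝ) (hh : ∀ j, 0 < h j) :
    (Matrix.diagonal (fun j => (Wᵀ * W).mulVec h j / h j) - Wᵀ * W).PosSemidef := by
  set A := Wᵀ * W with hA
  have hAsymm : ∀ j k, A j k = A k j := by
    intro j k
    simp only [hA, Matrix.mul_apply, Matrix.transpose_apply]
    exact Finset.sum_congr rfl fun i _ => mul_comm _ _
  have hApos : ∀ j k, 0 ≤ A j k := by
    intro j k
    simp only [hA, Matrix.mul_apply, Matrix.transpose_apply]
    exact Finset.sum_nonneg fun i _ => le_of_lt (mul_pos (hW i j) (hW i k))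
  refine Matrix.posSemidef_iff_dotProduct_mulVec.mpr ⟨?_, ?_⟩
  · have h1 : (Matrix.diagonal (fun j => A.mulVec h j / h j)).IsHermitian :=
      Matrix.isHermitian_diagonal _
    have h2 : A.IsHermitian := by
      ext j k
      simpa [Matrix.conjTranspose_apply] using hAsymm k j
    exact h1.sub h2
  · intro v
    have key : star v ⬝ᵥ (Matrix.diagonal (fun j => A.mulVec h j / h j) - A).mulVec v
        = (1/2) * ∑ j, ∑ k, A j k * (h k * v j - h j * v k)^2 / (h j * h k) := by
      have expand : star v ⬝ᵥ (Matrix.diagonal (fun j => A.mulVec h j / h j) - A).mulVec v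
          = ∑ j, ∑ k, (A j k * h k * v j ^ 2 / h j - A j k * v j * v k) := by
        rw [Matrix.sub_mulVec, dotProduct_sub]
        simp only [Finset.sum_sub_distrib]
        congr 1
        · simp only [star_trivial, dotProduct, Matrix.mulVec_diagonal]
          refine Finset.sum_congr rfl fun j _ => ?_
          simp only [Matrix.mulVec, dotProduct]
          rw [Finset.sum_div, Finset.sum_mul, Finset.mul_sum]
          refine Finset.sum_congr rfl fun k _ => ?_
          field_simp
        · simp only [star_trivial, dotProduct, Matrix.mulVec]
          refine Finset.sum_congr rfl fun j _ => ?_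
          rw [Finset.mul_sum]
          refine Finset.sum_congr rfl fun k _ => ?_
          ring
      rw [expand]
      have swap : ∑ j, ∑ k, A j k * h j * v k ^ 2 / h k
          = ∑ j, ∑ k, A j k * h k * v j ^ 2 / h j := by
        rw [Finset.sum_comm]
        refine Finset.sum_congr rfl fun j _ => Finset.sum_congr rfl fun k _ => ?_
        rw [hAsymm k j]
      have rhs_expand : ∀ j k, A j k * (h k * v j - h j * v k)^2 / (h j * h k)
          = A j k * h k * v j ^ 2 / h j - 2 * (A j k * v j * v k)
            + A j k * h j * v k ^ 2 / h k := by
        intro j k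
        have hj := (hh j).ne'
        have hk := (hh k).ne'
        field_simp
        ring
      have key2 : ∑ j, ∑ k, A j k * (h k * v j - h j * v k)^2 / (h j * h k)
          = (∑ j, ∑ k, A j k * h k * v j ^ 2 / h j)
            - 2 * (∑ j, ∑ k, A j k * v j * v k)
            + ∑ j, ∑ k, A j k * h j * v k ^ 2 / h k := by
        simp only [rhs_expand, Finset.sum_add_distrib, Finset.sum_sub_distrib,
          Finset.mul_sum]
      rw [key2, swap]
      simp only [Finset.sum_sub_distrib]
      ring
    rw [key]
    have : 0 ≤ ∑ j, ∑ k, A j k * (h k * v j - h j * v k)^2 / (h j * h k) := by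
      refine Finset.sum_nonneg fun j _ => Finset.sum_nonneg fun k _ => ?_
      have := hApos j k
      have hj := hh j
      have hk := hh k
      positivity
    linarith
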